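/- Let (a_n)_{n≥0} be a sequence of rational numbers satisfying ∑_{k=0}^n binomial(n,k)·(-1)^k·a_k = a_n for every nonnegative integer n. Then for every odd positive integer n, ∑_{k=0}^n binomial(n,k)·binomial(n+k,k)·(-1)^k·a_k = 0. -/

import Mathlib

open Finset

private lemma alt_sum (N : ℕ) :
    ∑ i ∈ Finset.range (N + 1), (-1 : ℚ) ^ i * (N.choose i : ℚ) =
      if N = 0 then 1 else 0 := by
  have h := Int.alternating_sum_range_choose (n := N)
  have h2 := congrArg (Int.cast : ℤ → ℚ) h
  push_cast [apply_ite (Int.cast : ℤ → ℚ)] at h2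
  split_ifs at h2 ⊢ with hN <;> simpa [hN] using h2

private lemma lemA (m s : ℕ) :
    ∑ i ∈ Finset.range (m + 1), (-1 : ℚ) ^ i * (m.choose i : ℚ) * (i.choose s : ℚ) =
      if s = m then (-1 : ℚ) ^ m else 0 := by
  by_cases hsm : s ≤ m
  · have hdrop : ∑ i ∈ Finset.range (m + 1),
        (-1 : ℚ) ^ i * (m.choose i : ℚ) * (i.choose s : ℚ) =
        ∑ i ∈ Finset.Ico s (m + 1),
        (-1 : ℚ) ^ i * (m.choose i : ℚ) * (i.choose s : ℚ) := by
      rw [Finset.range_eq_Ico, ← Finset.sum_Ico_consecutive _ (Nat.zero_le s) (by omega)]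
      have h0 : ∑ i ∈ Finset.Ico 0 s, (-1 : ℚ) ^ i * (m.choose i : ℚ) * (i.choose s : ℚ) = 0 := by
        apply Finset.sum_eq_zero
        intro i hi
        simp only [Finset.mem_Ico] at hi
        rw [Nat.choose_eq_zero_of_lt hi.2]
        simp
      rw [h0, zero_add]
    rw [hdrop, Finset.sum_Ico_eq_sum_range]
    have hrange : m + 1 - s = m - s + 1 := by omega
    rw [hrange]
    have hterm : ∀ i ∈ Finset.range (m - s + 1),
        (-1 : ℚ) ^ (s + i) * (m.choose (s + i) : ℚ) * ((s + i).choose s : ℚ) =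
        ((-1 : ℚ) ^ s * (m.choose s : ℚ)) * ((-1 : ℚ) ^ i * ((m - s).choose i : ℚ)) := by
      intro i hi
      simp only [Finset.mem_range] at hi
      have hmul := Nat.choose_mul (n := m) (k := s + i) (s := s) (by omega)
      have hmulQ : (m.choose (s + i) : ℚ) * ((s + i).choose s : ℚ) =
          (m.choose s : ℚ) * ((m - s).choose (s + i - s) : ℚ) := by exact_mod_cast hmul
      rw [show s + i - s = i by omega] at hmulQ
      rw [pow_add]
      rw [mul_assoc, hmulQ]
      ring
    rw [Finset.sum_congr rfl hterm, ← Finset.mul_sum, alt_sum]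
    by_cases hEq : s = m
    · subst hEq
      simp
    · rw [if_neg (by omega), if_neg hEq, mul_zero]
  · push_neg at hsm
    rw [if_neg (by omega)]
    apply Finset.sum_eq_zero
    intro i hi
    simp only [Finset.mem_range] at hi
    rw [Nat.choose_eq_zero_of_lt (show i < s by omega)]
    simp

private lemma lemC (m n r : ℕ) (hmn : m ≤ n) :
    ∑ i ∈ Finset.range (m + 1),
      (-1 : ℚ) ^ i * (m.choose i : ℚ) * ((r + i).choose n : ℚ) =
      (-1 : ℚ) ^ m * (r.choose (n - m) : ℚ) := by
  have hV : ∀ i : ℕ, ((r + i).choose n : ℚ) =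
      ∑ t ∈ Finset.range (n + 1), (r.choose t : ℚ) * (i.choose (n - t) : ℚ) := by
    intro i
    have h := Nat.add_choose_eq r i n
    rw [Finset.Nat.sum_antidiagonal_eq_sum_range_succ_mk] at h
    exact_mod_cast h
  calc ∑ i ∈ Finset.range (m + 1),
        (-1 : ℚ) ^ i * (m.choose i : ℚ) * ((r + i).choose n : ℚ)
      = ∑ i ∈ Finset.range (m + 1), ∑ t ∈ Finset.range (n + 1),
          ((-1 : ℚ) ^ i * (m.choose i : ℚ) * (i.choose (n - t) : ℚ)) * (r.choose t : ℚ) := by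
        apply Finset.sum_congr rfl
        intro i _
        rw [hV i, Finset.mul_sum]
        apply Finset.sum_congr rfl
        intro t _
        ring
    _ = ∑ t ∈ Finset.range (n + 1),
          (∑ i ∈ Finset.range (m + 1),
            (-1 : ℚ) ^ i * (m.choose i : ℚ) * (i.choose (n - t) : ℚ)) * (r.choose t : ℚ) := by
        rw [Finset.sum_comm]
        exact Finset.sum_congr rfl fun t _ => (Finset.sum_mul _ _ _).symm
    _ = ∑ t ∈ Finset.range (n + 1),
          (if n - t = m then (-1 : ℚ) ^ m else 0) * (r.choose t : ℚ) := by
        exact Finset.sum_congr rfl fun t _ => by rw [lemA m (n - t)]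
    _ = (-1 : ℚ) ^ m * (r.choose (n - m) : ℚ) := by
        rw [Finset.sum_eq_single (n - m)]
        · rw [if_pos (by omega)]
        · intro t ht htne
          simp only [Finset.mem_range] at ht
          rw [if_neg (by omega), zero_mul]
        · intro h
          exact absurd (Finset.mem_range.2 (by omega)) h

private lemma lemD (n j : ℕ) (hj : j ≤ n) :
    ∑ k ∈ Finset.range (n + 1),
      (-1 : ℚ) ^ k * (n.choose k : ℚ) * ((n + k).choose k : ℚ) * (k.choose j : ℚ) =
      (-1 : ℚ) ^ n * (n.choose j : ℚ) * ((n + j).choose j : ℚ) := by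
  have hdrop : ∑ k ∈ Finset.range (n + 1),
      (-1 : ℚ) ^ k * (n.choose k : ℚ) * ((n + k).choose k : ℚ) * (k.choose j : ℚ) =
      ∑ k ∈ Finset.Ico j (n + 1),
      (-1 : ℚ) ^ k * (n.choose k : ℚ) * ((n + k).choose k : ℚ) * (k.choose j : ℚ) := by
    rw [Finset.range_eq_Ico, ← Finset.sum_Ico_consecutive _ (Nat.zero_le j) (by omega)]
    have h0 : ∑ k ∈ Finset.Ico 0 j,
        (-1 : ℚ) ^ k * (n.choose k : ℚ) * ((n + k).choose k : ℚ) * (k.choose j : ℚ) = 0 := by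
      apply Finset.sum_eq_zero
      intro k hk
      simp only [Finset.mem_Ico] at hk
      rw [Nat.choose_eq_zero_of_lt hk.2]
      simp
    rw [h0, zero_add]
  rw [hdrop, Finset.sum_Ico_eq_sum_range, show n + 1 - j = n - j + 1 by omega]
  have hterm : ∀ i ∈ Finset.range (n - j + 1),
      (-1 : ℚ) ^ (j + i) * (n.choose (j + i) : ℚ) * ((n + (j + i)).choose (j + i) : ℚ) *
        ((j + i).choose j : ℚ) =
      ((-1 : ℚ) ^ j * (n.choose j : ℚ)) *
        ((-1 : ℚ) ^ i * ((n - j).choose i : ℚ) * (((n + j) + i).choose n : ℚ)) := by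
    intro i hi
    simp only [Finset.mem_range] at hi
    have h1 : (n + (j + i)).choose (j + i) = ((n + j) + i).choose n := by
      have := Nat.choose_symm (n := n + (j + i)) (k := j + i) (by omega)
      rw [show n + (j + i) - (j + i) = n by omega] at this
      rw [← this]
      congr 1
      omega
    have h2 := Nat.choose_mul (n := n) (k := j + i) (s := j) (by omega)
    rw [show j + i - j = i by omega] at h2
    have h2Q : (n.choose (j + i) : ℚ) * ((j + i).choose j : ℚ) =
        (n.choose j : ℚ) * ((n - j).choose i : ℚ) := by exact_mod_cast h2
    rw [h1, pow_add]
    push_cast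
    linear_combination ((-1 : ℚ) ^ j * (-1 : ℚ) ^ i * (((n + j + i).choose n : ℚ))) * h2Q
  rw [Finset.sum_congr rfl hterm, ← Finset.mul_sum, lemC (n - j) n (n + j) (by omega)]
  rw [show n - (n - j) = j by omega]
  rw [show ((-1 : ℚ) ^ j * (n.choose j : ℚ)) * ((-1 : ℚ) ^ (n - j) * ((n + j).choose j : ℚ)) =
      ((-1 : ℚ) ^ j * (-1 : ℚ) ^ (n - j)) * (n.choose j : ℚ) * ((n + j).choose j : ℚ) by ring]
  rw [← pow_add, show j + (n - j) = n by omega]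

theorem odd_vanishing_of_binom_self_inverse (a : ℕ → ℚ)
    (ha : ∀ n : ℕ, ∑ k ∈ Finset.range (n + 1), (n.choose k : ℚ) * (-1) ^ k * a k = a n)
    (n : ℕ) (hn : Odd n) :
    ∑ k ∈ Finset.range (n + 1),
        (n.choose k : ℚ) * ((n + k).choose k : ℚ) * (-1) ^ k * a k = 0 := by
  set S := ∑ k ∈ Finset.range (n + 1),
      (n.choose k : ℚ) * ((n + k).choose k : ℚ) * (-1) ^ k * a k with hS
  have hsub : ∀ k ∈ Finset.range (n + 1),
      (n.choose k : ℚ) * ((n + k).choose k : ℚ) * (-1) ^ k * a k =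
      ∑ j ∈ Finset.range (n + 1),
        ((-1 : ℚ) ^ k * (n.choose k : ℚ) * ((n + k).choose k : ℚ) * (k.choose j : ℚ)) *
          ((-1 : ℚ) ^ j * a j) := by
    intro k hk
    simp only [Finset.mem_range] at hk
    have hak : a k = ∑ j ∈ Finset.range (n + 1), (k.choose j : ℚ) * (-1) ^ j * a j := by
      rw [← ha k]
      apply Finset.sum_subset (Finset.range_subset_range.2 (by omega))
      intro j _ hj
      simp only [Finset.mem_range, not_lt] at hj
      rw [Nat.choose_eq_zero_of_lt (by omega)]
      simp
    rw [hak, Finset.mul_sum]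
    apply Finset.sum_congr rfl
    intro j _
    ring
  have hstep : S = (-1 : ℚ) ^ n * S := by
    calc S = ∑ k ∈ Finset.range (n + 1), ∑ j ∈ Finset.range (n + 1),
          ((-1 : ℚ) ^ k * (n.choose k : ℚ) * ((n + k).choose k : ℚ) * (k.choose j : ℚ)) *
            ((-1 : ℚ) ^ j * a j) := Finset.sum_congr rfl hsub
      _ = ∑ j ∈ Finset.range (n + 1),
          (∑ k ∈ Finset.range (n + 1),
            (-1 : ℚ) ^ k * (n.choose k : ℚ) * ((n + k).choose k : ℚ) * (k.choose j : ℚ)) *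
            ((-1 : ℚ) ^ j * a j) := by
          rw [Finset.sum_comm]
          exact Finset.sum_congr rfl fun j _ => (Finset.sum_mul _ _ _).symm
      _ = ∑ j ∈ Finset.range (n + 1),
          ((-1 : ℚ) ^ n * (n.choose j : ℚ) * ((n + j).choose j : ℚ)) *
            ((-1 : ℚ) ^ j * a j) := by
          apply Finset.sum_congr rfl
          intro j hj
          simp only [Finset.mem_range] at hj
          rw [lemD n j (by omega)]
      _ = (-1 : ℚ) ^ n * S := by
          rw [hS, Finset.mul_sum]
          apply Finset.sum_congr rfl
          intro j _
          ring
  rw [Odd.neg_one_pow hn] at hstep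
  linarith
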